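/- A subset S ⊆ 𝕊 is closed in the pcfb-topology if and only if it is closed under pcfb-limits of sequences: whenever (s_k)_{k ∈ ℕ} is a sequence of elements of S that pcfb-converges to a supernatural number s, one has s ∈ S. -/
import Mathlib


open Topology

/-- A supernatural number: a function from the set of primes to `ℕ∞ = ℕ ∪ {∞}`,
thought of as the formal product `∏ p ^ (s p)`. -/
def Supernatural : Type := Nat.Primes → ℕ∞

/-- Divisibility of supernatural numbers: `s ∣ t` iff `s p ≤ t p` for every prime `p`. -/
instance : Dvd Supernatural := ⟨fun s t => ∀ p, s p ≤ t p⟩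

/-- The supernatural number associated to a positive natural number,
given by its prime factorization. -/
def natToSuper (n : ℕ+) : Supernatural := fun p => ((n : ℕ).factorization p : ℕ∞)

/-- The pcfb-topology on `𝕊`, generated by the sets `{x | n ∣ x ∧ x ∣ s}`
for `n` a positive natural number and `s` a supernatural number. -/
def pcfbTopology : TopologicalSpace Supernatural :=
  .generateFrom {U | ∃ (n : ℕ+) (t : Supernatural), U = {x | natToSuper n ∣ x ∧ x ∣ t}}

/-- A sequence of supernatural numbers pcfb-converges to `s` if every term divides `s`
and every positive natural number dividing `s` divides some term. -/
def PcfbConvergesTo (sk : ℕ → Supernatural) (s : Supernatural) : Prop :=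
  (∀ k, sk k ∣ s) ∧ ∀ n : ℕ+, natToSuper n ∣ s → ∃ k, natToSuper n ∣ sk k

lemma super_dvd_iff {s t : Supernatural} : s ∣ t ↔ ∀ p, s p ≤ t p := Iff.rfl

lemma super_dvd_refl (s : Supernatural) : s ∣ s := fun p => le_refl _

lemma super_dvd_trans {a b c : Supernatural} (h1 : a ∣ b) (h2 : b ∣ c) : a ∣ c :=
  fun p => le_trans (h1 p) (h2 p)

lemma natToSuper_one_dvd (x : Supernatural) : natToSuper 1 ∣ x := by
  intro p
  simp [natToSuper]

lemma natToSuper_dvd_of_dvd {n m : ℕ+} (h : (n : ℕ) ∣ (m : ℕ)) :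
    natToSuper n ∣ natToSuper m := by
  intro p
  have h2 : (n : ℕ).factorization p ≤ (m : ℕ).factorization p :=
    (Nat.factorization_le_iff_dvd n.ne_zero m.ne_zero).2 h p
  show ((n : ℕ).factorization p : ℕ∞) ≤ ((m : ℕ).factorization p : ℕ∞)
  exact_mod_cast h2

lemma exists_basic {U : Set Supernatural}
    (hU : TopologicalSpace.GenerateOpen
      {U | ∃ (n : ℕ+) (t : Supernatural), U = {x | natToSuper n ∣ x ∧ x ∣ t}} U)
    {s : Supernatural} (hs : s ∈ U) :
    ∃ (n : ℕ+) (t : Supernatural), (natToSuper n ∣ s ∧ s ∣ t) ∧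
      {x | natToSuper n ∣ x ∧ x ∣ t} ⊆ U := by
  induction hU with
  | basic V hV =>
    obtain ⟨n, t, rfl⟩ := hV
    exact ⟨n, t, hs, subset_rfl⟩
  | univ => exact ⟨1, s, ⟨natToSuper_one_dvd s, super_dvd_refl s⟩, Set.subset_univ _⟩
  | inter U1 U2 h1 h2 ih1 ih2 =>
    obtain ⟨n1, t1, ⟨a1, b1⟩, c1⟩ := ih1 hs.1
    obtain ⟨n2, t2, ⟨a2, b2⟩, c2⟩ := ih2 hs.2
    set N : ℕ+ := ⟨Nat.lcm n1 n2, Nat.pos_of_ne_zero (Nat.lcm_ne_zero n1.ne_zero n2.ne_zero)⟩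
      with hN
    have hN1 : (n1 : ℕ) ∣ (N : ℕ) := Nat.dvd_lcm_left _ _
    have hN2 : (n2 : ℕ) ∣ (N : ℕ) := Nat.dvd_lcm_right _ _
    refine ⟨N, fun p => min (t1 p) (t2 p), ⟨?_, fun p => le_min (b1 p) (b2 p)⟩, ?_⟩
    · intro p
      have hl : ((Nat.lcm (n1:ℕ) n2).factorization p : ℕ∞)
          = max ((n1:ℕ).factorization p : ℕ∞) ((n2:ℕ).factorization p : ℕ∞) := by
        rw [Nat.factorization_lcm n1.ne_zero n2.ne_zero]
        rw [Finsupp.sup_apply]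
        exact Nat.mono_cast.map_max
      show ((Nat.lcm (n1:ℕ) n2).factorization p : ℕ∞) ≤ s p
      rw [hl]
      exact max_le (a1 p) (a2 p)
    · intro x hx
      obtain ⟨hnx, hxt⟩ := hx
      have d1 : natToSuper n1 ∣ x :=
        super_dvd_trans (natToSuper_dvd_of_dvd hN1) hnx
      have d2 : natToSuper n2 ∣ x :=
        super_dvd_trans (natToSuper_dvd_of_dvd hN2) hnx
      exact ⟨c1 ⟨d1, fun p => (hxt p).trans (min_le_left _ _)⟩,
        c2 ⟨d2, fun p => (hxt p).trans (min_le_right _ _)⟩⟩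
  | sUnion 𝒮 h ih =>
    obtain ⟨U, hU𝒮, hsU⟩ := hs
    obtain ⟨n, t, hnt, hsub⟩ := ih U hU𝒮 hsU
    exact ⟨n, t, hnt, hsub.trans (Set.subset_sUnion_of_mem hU𝒮)⟩

theorem stmt5 (S : Set Supernatural) :
    IsClosed[pcfbTopology] S ↔
      ∀ (sk : ℕ → Supernatural), (∀ k, sk k ∈ S) →
        ∀ s : Supernatural, PcfbConvergesTo sk s → s ∈ S := by
  constructor
  · intro hS sk hsk s hconv
    by_contra hs
    have hopen : @IsOpen _ pcfbTopology Sᶜ := hS.isOpen_compl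
    obtain ⟨n, t, ⟨hn, ht⟩, hsub⟩ := exists_basic hopen hs
    obtain ⟨k, hk⟩ := hconv.2 n hn
    exact hsub ⟨hk, super_dvd_trans (hconv.1 k) ht⟩ (hsk k)
  · intro hseq
    refine @IsClosed.mk _ pcfbTopology S ?_
    -- Key: every s ∈ Sᶜ has a basic neighborhood inside Sᶜ
    have key : ∀ s ∈ Sᶜ, ∃ n : ℕ+, natToSuper n ∣ s ∧
        {x | natToSuper n ∣ x ∧ x ∣ s} ⊆ Sᶜ := by
      intro s hs
      by_contra hcon
      push_neg at hcon
      classical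
      have hwit : ∀ n : ℕ+, natToSuper n ∣ s →
          ∃ x, (natToSuper n ∣ x ∧ x ∣ s) ∧ x ∈ S := by
        intro n hn
        obtain ⟨x, hx1, hx2⟩ := Set.not_subset.1 (hcon n hn)
        exact ⟨x, hx1, Set.notMem_compl_iff.1 hx2⟩
      choose w hw1 hw2 using hwit
      have h1 : natToSuper 1 ∣ s := natToSuper_one_dvd s
      set sk : ℕ → Supernatural := fun k =>
        if h : natToSuper ⟨k + 1, k.succ_pos⟩ ∣ s then w _ h else w 1 h1 with hskdef
      have hmem : ∀ k, sk k ∈ S := by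
        intro k
        simp only [hskdef]
        split <;> apply hw2
      have hconv : PcfbConvergesTo sk s := by
        constructor
        · intro k
          simp only [hskdef]
          split
          · exact (hw1 _ _).2
          · exact (hw1 _ _).2
        · intro n hn
          obtain ⟨m, hm⟩ : ∃ m : ℕ, n = ⟨m + 1, Nat.succ_pos m⟩ :=
            ⟨(n : ℕ) - 1, Subtype.ext (Nat.succ_pred_eq_of_pos n.pos).symm⟩
          subst hm
          refine ⟨m, ?_⟩
          simp only [hskdef]
          rw [dif_pos hn]
          exact (hw1 _ hn).1
      exact hs (hseq sk hmem s hconv)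
    have hrepr : Sᶜ = ⋃₀ {U | (∃ (n : ℕ+) (t : Supernatural),
        U = {x | natToSuper n ∣ x ∧ x ∣ t}) ∧ U ⊆ Sᶜ} := by
      ext s
      constructor
      · intro hs
        obtain ⟨n, hn, hsub⟩ := key s hs
        exact ⟨_, ⟨⟨n, s, rfl⟩, hsub⟩, hn, super_dvd_refl s⟩
      · rintro ⟨U, ⟨_, hsub⟩, hsU⟩
        exact hsub hsU
    rw [hrepr]
    exact TopologicalSpace.GenerateOpen.sUnion _ (fun U hU => .basic U hU.1)
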